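/- For all natural numbers r_α, r_ω, z_ω, k with r_α ≤ k, the following identity holds: Σ_{i=0}^{k} C(r_ω + z_ω + i, i) · C(r_α + r_ω, k − i) = Σ_{i=0}^{r_ω} C(r_ω, i) · 2^i · Σ_{j=0}^{r_α} C(r_α, j) · C(k + z_ω − j, i + z_ω), where C(a,b) denotes the binomial coefficient with C(a,b) = 0 when a < b. -/

import Mathlib

open Finset

lemma vand (a b n : ℕ) :
    (a + b).choose n = ∑ j ∈ range (n + 1), a.choose j * b.choose (n - j) := by
  rw [Nat.add_choose_eq, Finset.Nat.sum_antidiagonal_eq_sum_range_succ_mk]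

lemma lemC (a b c : ℕ) :
    ∑ s ∈ range (a + 1), a.choose s * b.choose (c + s) = (a + b).choose (a + c) := by
  rw [vand a b (a + c)]
  rw [← Finset.sum_subset (Finset.range_subset_range.2 (by omega) :
        range (a + 1) ⊆ range (a + c + 1))]
  · rw [← Finset.sum_range_reflect]
    refine Finset.sum_congr rfl fun s hs => ?_
    have hs' : s ≤ a := by simpa [Nat.lt_succ_iff] using hs
    have h1 : a + 1 - 1 - s = a - s := by omega
    have h2 : c + (a - s) = a + c - s := by omega
    rw [h1, Nat.choose_symm hs', h2]
  · intro j _ hj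
    have : a < j := by simpa [Nat.lt_succ_iff] using hj
    rw [Nat.choose_eq_zero_of_lt this, Nat.zero_mul]

lemma lemB (rw zw m : ℕ) :
    ∑ i ∈ range (m + 1), (rw + zw + i).choose i * rw.choose (m - i) =
    ∑ i ∈ range (rw + 1), rw.choose i * 2 ^ i * (m + zw).choose (i + zw) := by
  set M := max m rw with hM
  have hL : ∑ i ∈ range (m + 1), (rw + zw + i).choose i * rw.choose (m - i)
      = ∑ t ∈ range (M + 1), rw.choose t * (rw + m + zw - t).choose (rw + zw) := by
    have refl0 := Finset.sum_range_reflect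
      (fun i => (rw + zw + i).choose i * rw.choose (m - i)) (m + 1)
    rw [← refl0]
    rw [← Finset.sum_subset (Finset.range_subset_range.2 (by omega) :
          range (m + 1) ⊆ range (M + 1))]
    · refine Finset.sum_congr rfl fun t ht => ?_
      have ht' : t ≤ m := by simpa [Nat.lt_succ_iff] using ht
      have e1 : m + 1 - 1 - t = m - t := by omega
      have e2 : m - (m - t) = t := by omega
      have e3 : rw + zw + (m - t) = rw + m + zw - t := by omega
      have e4 : rw + zw + (m - t) - (rw + zw) = m - t := by omega
      have hsym := Nat.choose_symm (Nat.le_add_right (rw + zw) (m - t))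
      rw [Nat.add_sub_cancel_left] at hsym
      rw [e1, e2, hsym, e3, Nat.mul_comm]
    · intro t ht htm
      have h1 : m < t := by simp only [Finset.mem_range] at htm; omega
      have h2 : t ≤ M := by simp only [Finset.mem_range] at ht; omega
      by_cases h3 : t ≤ rw
      · have : rw + m + zw - t < rw + zw := by omega
        rw [Nat.choose_eq_zero_of_lt this, Nat.mul_zero]
      · rw [Nat.choose_eq_zero_of_lt (by omega), Nat.zero_mul]
  have hR : ∑ i ∈ range (rw + 1), rw.choose i * 2 ^ i * (m + zw).choose (i + zw)
      = ∑ t ∈ range (M + 1), rw.choose t * (rw + m + zw - t).choose (rw + zw) := by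
    have step1 : ∀ i ∈ range (rw + 1),
        rw.choose i * 2 ^ i * (m + zw).choose (i + zw)
        = ∑ t ∈ range (rw + 1),
            rw.choose i * i.choose t * (m + zw).choose (i + zw) := by
      intro i hi
      have hi' : i ≤ rw := by simpa [Nat.lt_succ_iff] using hi
      rw [← Nat.sum_range_choose i, Finset.mul_sum, Finset.sum_mul]
      rw [← Finset.sum_subset (Finset.range_subset_range.2 (by omega) :
            range (i + 1) ⊆ range (rw + 1))]
      intro t _ ht
      have : i < t := by simpa [Nat.lt_succ_iff] using ht
      rw [Nat.choose_eq_zero_of_lt this, Nat.mul_zero, Nat.zero_mul]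
    rw [Finset.sum_congr rfl step1, Finset.sum_comm]
    rw [← Finset.sum_subset (Finset.range_subset_range.2 (by omega) :
          range (rw + 1) ⊆ range (M + 1))]
    · refine Finset.sum_congr rfl fun t ht => ?_
      have ht' : t ≤ rw := by simpa [Nat.lt_succ_iff] using ht
      have hsub : ∑ i ∈ range (rw + 1),
            rw.choose i * i.choose t * (m + zw).choose (i + zw)
          = ∑ i ∈ Finset.Ico t (rw + 1),
            rw.choose i * i.choose t * (m + zw).choose (i + zw) := by
        refine (Finset.sum_subset (fun x hx => ?_) (fun i hmem hi => ?_)).symm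
        · simp only [Finset.mem_Ico] at hx; simp only [Finset.mem_range]; omega
        · simp only [Finset.mem_range] at hmem
          simp only [Finset.mem_Ico, not_and, not_le] at hi
          have : i < t := by omega
          rw [Nat.choose_eq_zero_of_lt this, Nat.mul_zero, Nat.zero_mul]
      rw [hsub, Finset.sum_Ico_eq_sum_range]
      have hterm : ∀ s ∈ range (rw + 1 - t),
          rw.choose (t + s) * (t + s).choose t * (m + zw).choose (t + s + zw)
          = rw.choose t * ((rw - t).choose s * (m + zw).choose (t + zw + s)) := by
        intro s hs
        have hs' : s < rw + 1 - t := by simpa using hs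
        rw [Nat.choose_mul (n := rw) (Nat.le_add_right t s),
          Nat.add_sub_cancel_left, Nat.add_right_comm t s zw, Nat.mul_assoc]
      rw [Finset.sum_congr rfl hterm, ← Finset.mul_sum,
        show rw + 1 - t = (rw - t) + 1 by omega, lemC (rw - t) (m + zw) (t + zw),
        show rw - t + (m + zw) = rw + m + zw - t by omega,
        show rw - t + (t + zw) = rw + zw by omega]
    · intro t _ htm
      have : rw < t := by simp only [Finset.mem_range, not_lt] at htm; omega
      rw [Nat.choose_eq_zero_of_lt this, Nat.zero_mul]
  rw [hL, hR]

lemma tri (n : ℕ) (f : ℕ → ℕ → ℕ) :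
    ∑ i ∈ range (n + 1), ∑ j ∈ range (n + 1 - i), f i j
    = ∑ j ∈ range (n + 1), ∑ i ∈ range (n + 1 - j), f i j := by
  have key : ∀ g : ℕ → ℕ → ℕ,
      ∑ i ∈ range (n + 1), ∑ j ∈ range (n + 1 - i), g i j
      = ∑ i ∈ range (n + 1), ∑ j ∈ range (n + 1), if i + j ≤ n then g i j else 0 := by
    intro g
    refine Finset.sum_congr rfl fun i _ => ?_
    rw [← Finset.sum_filter]
    refine Finset.sum_congr ?_ fun _ _ => rfl
    ext j
    simp only [Finset.mem_filter, Finset.mem_range]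
    omega
  rw [key f, key (fun j i => f i j), Finset.sum_comm]
  refine Finset.sum_congr rfl fun i _ => Finset.sum_congr rfl fun j _ => ?_
  rw [Nat.add_comm]

theorem stmt_6 (rα rω zω k : ℕ) (hrα : rα ≤ k) :
    ∑ i ∈ Finset.range (k + 1),
        Nat.choose (rω + zω + i) i * Nat.choose (rα + rω) (k - i) =
    ∑ i ∈ Finset.range (rω + 1), Nat.choose rω i * 2 ^ i *
        ∑ j ∈ Finset.range (rα + 1),
          Nat.choose rα j * Nat.choose (k + zω - j) (i + zω) := by
  have step1 : ∀ i ∈ range (k + 1),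
      (rω + zω + i).choose i * (rα + rω).choose (k - i)
      = ∑ j ∈ range (k + 1 - i),
          (rω + zω + i).choose i * (rα.choose j * rω.choose (k - i - j)) := by
    intro i hi
    have hi' : i ≤ k := by simpa [Nat.lt_succ_iff] using hi
    rw [vand rα rω (k - i), Finset.mul_sum, show k - i + 1 = k + 1 - i by omega]
  rw [Finset.sum_congr rfl step1,
    tri k (fun i j => (rω + zω + i).choose i * (rα.choose j * rω.choose (k - i - j)))]
  have step2 : ∀ j ∈ range (k + 1),
      ∑ i ∈ range (k + 1 - j),
          (rω + zω + i).choose i * (rα.choose j * rω.choose (k - i - j))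
      = rα.choose j * ∑ i ∈ range (rω + 1),
          rω.choose i * 2 ^ i * (k - j + zω).choose (i + zω) := by
    intro j hj
    have hj' : j ≤ k := by simpa [Nat.lt_succ_iff] using hj
    rw [← lemB rω zω (k - j), show k - j + 1 = k + 1 - j by omega, Finset.mul_sum]
    refine Finset.sum_congr rfl fun i _ => ?_
    rw [show k - i - j = k - j - i by omega]
    ring
  rw [Finset.sum_congr rfl step2]
  rw [← Finset.sum_subset (Finset.range_subset_range.2 (by omega) :
        range (rα + 1) ⊆ range (k + 1))]
  · have step3 : ∀ j ∈ range (rα + 1),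
        rα.choose j * ∑ i ∈ range (rω + 1),
            rω.choose i * 2 ^ i * (k - j + zω).choose (i + zω)
        = ∑ i ∈ range (rω + 1),
            rω.choose i * 2 ^ i * (rα.choose j * (k + zω - j).choose (i + zω)) := by
      intro j hj
      have hj' : j ≤ rα := by simpa [Nat.lt_succ_iff] using hj
      rw [show k - j + zω = k + zω - j by omega, Finset.mul_sum]
      exact Finset.sum_congr rfl fun i _ => by ring
    rw [Finset.sum_congr rfl step3, Finset.sum_comm]
    refine Finset.sum_congr rfl fun i _ => ?_
    rw [Finset.mul_sum]
  · intro j _ hj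
    have : rα < j := by simpa [Nat.lt_succ_iff] using hj
    rw [Nat.choose_eq_zero_of_lt this, Nat.zero_mul]
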